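/- Let φ : ℤ → ℤ → Prop be an arbitrary guard and t : ℤ → ℤ → ℤ an arbitrary update term. Define the transition relation R on states (c, a) ∈ ℤ × (ℤ → ℤ) by: R (c, a) (c', a') holds iff φ c (a c) holds, c' = c + 1, and a' = Function.update a c (t c (a c)). Then the acceleration (transitive closure) of R is expressible in one shot: for all (c, a) and (c', a'), Relation.TransGen R (c, a) (c', a') holds if and only if there exists n : ℕ with n > 0 such that (∀ j : ℤ, c ≤ j → j < c + n → φ j (a j)), c' = c + n, and a' = (fun j => if c ≤ j ∧ j < c + n then t j (a j) else a j). -/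

import Mathlib

theorem simple_local_ground_assignment_acceleration
    (φ : ℤ → ℤ → Prop) (t : ℤ → ℤ → ℤ)
    (c : ℤ) (a : ℤ → ℤ) (c' : ℤ) (a' : ℤ → ℤ) :
    Relation.TransGen
      (fun p q : ℤ × (ℤ → ℤ) =>
        φ p.1 (p.2 p.1) ∧ q.1 = p.1 + 1 ∧
          q.2 = Function.update p.2 p.1 (t p.1 (p.2 p.1)))
      (c, a) (c', a') ↔
    ∃ n : ℕ, n > 0 ∧
      (∀ j : ℤ, c ≤ j → j < c + n → φ j (a j)) ∧
      c' = c + n ∧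
      a' = fun j => if c ≤ j ∧ j < c + n then t j (a j) else a j := by
  set R : ℤ × (ℤ → ℤ) → ℤ × (ℤ → ℤ) → Prop :=
    (fun p q : ℤ × (ℤ → ℤ) =>
        φ p.1 (p.2 p.1) ∧ q.1 = p.1 + 1 ∧
          q.2 = Function.update p.2 p.1 (t p.1 (p.2 p.1))) with hR
  constructor
  · intro h
    have key : ∀ q : ℤ × (ℤ → ℤ), Relation.TransGen R (c, a) q →
        ∃ n : ℕ, n > 0 ∧ (∀ j : ℤ, c ≤ j → j < c + n → φ j (a j)) ∧
          q.1 = c + n ∧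
          q.2 = fun j => if c ≤ j ∧ j < c + n then t j (a j) else a j := by
      intro q h
      induction h with
      | single h =>
        obtain ⟨hφ, h1, h2⟩ := h
        refine ⟨1, one_pos, ?_, by push_cast; omega, ?_⟩
        · intro j hj1 hj2
          have : j = c := by push_cast at hj2; omega
          subst this; exact hφ
        · rw [h2]; funext j
          by_cases hj : j = c
          · subst hj; simp
          · rw [Function.update_of_ne hj]
            have : ¬ (c ≤ j ∧ j < c + ((1:ℕ):ℤ)) := by push_cast; omega
            push_cast at this
            simp [this]; intros; omega
      | tail h1 h2 ih =>
        obtain ⟨n, hn, hφn, hb1, hb2⟩ := ih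
        obtain ⟨hφb, hq1, hq2⟩ := h2
        have hba : ∀ j : ℤ, c + n ≤ j →
            (fun j => if c ≤ j ∧ j < c + n then t j (a j) else a j) j = a j := by
          intro j hj
          have : ¬ (c ≤ j ∧ j < c + n) := by omega
          simp [this]
        refine ⟨n + 1, Nat.succ_pos n, ?_, by rw [hq1, hb1]; push_cast; ring, ?_⟩
        · intro j hj1 hj2
          by_cases hj : j < c + n
          · exact hφn j hj1 hj
          · have : j = c + n := by push_cast at hj2; omega
            subst this
            have := hφb
            rw [hb1, hb2, hba _ le_rfl] at this
            exact this
        · rw [hq2, hb1, hb2]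
          funext j
          by_cases hj : j = c + n
          · subst hj
            rw [Function.update_self, hba _ le_rfl]
            have : (c ≤ c + (n:ℤ) ∧ c + (n:ℤ) < c + ((n:ℕ)+1:ℕ)) := by push_cast; omega
            simp [this]
          · rw [Function.update_of_ne hj]
            have : (c ≤ j ∧ j < c + ((n:ℕ)+1:ℕ)) ↔ (c ≤ j ∧ j < c + n) := by
              push_cast; omega
            simp only [this]
    exact key (c', a') h
  · rintro ⟨n, hn, hφn, rfl, rfl⟩
    have key : ∀ m : ℕ, 0 < m → (∀ j : ℤ, c ≤ j → j < c + m → φ j (a j)) →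
        Relation.TransGen R (c, a)
          (c + m, fun j => if c ≤ j ∧ j < c + m then t j (a j) else a j) := by
      intro m
      induction m with
      | zero => intro h; omega
      | succ k ih =>
        intro _ hφk
        by_cases hk : k = 0
        · subst hk
          apply Relation.TransGen.single
          refine ⟨hφk c le_rfl (by push_cast; omega), by push_cast; ring, ?_⟩
          funext j
          by_cases hj : j = c
          · subst hj; simp
          · rw [Function.update_of_ne hj]
            have : ¬ (c ≤ j ∧ j < c + (((0:ℕ)+1:ℕ):ℤ)) := by push_cast; omega
            push_cast at this
            simp [this]; intros; omega
        · have hk0 : 0 < k := Nat.pos_of_ne_zero hk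
          have step := ih hk0 (fun j h1 h2 => hφk j h1 (by push_cast at *; omega))
          refine step.tail ?_
          have hba : ¬ (c ≤ c + (k:ℤ) ∧ c + (k:ℤ) < c + (k:ℤ)) := by omega
          refine ⟨?_, by push_cast; ring, ?_⟩
          · simpa [hba] using hφk (c + k) (by omega) (by push_cast; omega)
          · funext j
            by_cases hj : j = c + k
            · subst hj
              simp only [Function.update_self, hba, if_false]
              have : (c ≤ c + (k:ℤ) ∧ c + (k:ℤ) < c + ((k:ℕ)+1:ℕ)) := by push_cast; omega
              simp [this]
            · rw [Function.update_of_ne hj]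
              have : (c ≤ j ∧ j < c + ((k:ℕ)+1:ℕ)) ↔ (c ≤ j ∧ j < c + k) := by
                push_cast; omega
              simp only [this]
    exact key n hn hφn
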